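/- arXiv:2405.03979 — 8 statements merged into one kernel-verified Lean document; each statement's English description precedes it below -/
import Mathlib

section
/- Let F be a free group with normal subgroup R, and let f be the augmentation ideal of ℤ[F] and r = (R-1)ℤ[F] the relation ideal. Then r·f ∩ f³ = (r ∩ f²)·f. -/
/-- The augmentation homomorphism of the integral group ring `ℤ[G]`. -/
noncomputable def aug (G : Type*) [Group G] : MonoidAlgebra ℤ G →ₐ[ℤ] ℤ :=
  MonoidAlgebra.lift ℤ ℤ G 1

/-- The augmentation ideal of `ℤ[G]`, viewed as a `ℤ`-submodule of `ℤ[G]`. -/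
noncomputable def augIdeal (G : Type*) [Group G] : Submodule ℤ (MonoidAlgebra ℤ G) :=
  (RingHom.ker (aug G).toRingHom).restrictScalars ℤ

/-- The relation ideal `r = (R - 1)·ℤ[G]` associated to a (normal) subgroup `R ≤ G`,
viewed as a `ℤ`-submodule of `ℤ[G]`. -/
noncomputable def relIdeal (G : Type*) [Group G] (R : Subgroup G) :
    Submodule ℤ (MonoidAlgebra ℤ G) :=
  Submodule.span ℤ {x | ∃ ρ ∈ R, ∃ a : MonoidAlgebra ℤ G,
    x = (MonoidAlgebra.of ℤ G ρ - 1) * a}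

open MonoidAlgebra

namespace FoxAux

variable (α : Type*)

abbrev ZF := MonoidAlgebra ℤ (FreeGroup α)
abbrev MM := α →₀ MonoidAlgebra ℤ (FreeGroup α)

noncomputable def act (g : FreeGroup α) : MM α ≃+ MM α :=
  DistribMulAction.toAddEquiv (MM α) ((MonoidAlgebra.of ℤ (FreeGroup α)).toHomUnits g)

lemma act_apply (g : FreeGroup α) (m : MM α) :
    act α g m = (MonoidAlgebra.of ℤ (FreeGroup α) g) • m := rfl

noncomputable def φAct : FreeGroup α →* MulAut (Multiplicative (MM α)) where
  toFun g := AddEquiv.toMultiplicative (act α g)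
  map_one' := by ext m; simp [AddEquiv.toMultiplicative, act_apply]
  map_mul' g h := by ext m; simp [AddEquiv.toMultiplicative, act_apply, mul_smul, mul_assoc]

end FoxAux

namespace Step2
open FoxAux SemidirectProduct

variable (α : Type*)

lemma φAct_toAdd (g : FreeGroup α) (x : Multiplicative (MM α)) :
    Multiplicative.toAdd (φAct α g x) =
      (MonoidAlgebra.of ℤ (FreeGroup α) g) • Multiplicative.toAdd x := rfl

noncomputable def Φ : FreeGroup α →* SemidirectProduct (Multiplicative (MM α)) (FreeGroup α) (φAct α) :=
  FreeGroup.lift fun β => ⟨Multiplicative.ofAdd (Finsupp.single β 1), FreeGroup.of β⟩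

lemma Φ_right (g : FreeGroup α) : (Φ α g).right = g := by
  have h : (SemidirectProduct.rightHom.comp (Φ α)) = MonoidHom.id (FreeGroup α) := by
    apply FreeGroup.ext_hom; intro β
    simp [Φ, rightHom]
  exact DFunLike.congr_fun h g

noncomputable def DD (g : FreeGroup α) : MM α := Multiplicative.toAdd (Φ α g).left

lemma DD_one : DD α 1 = 0 := by simp [DD]

lemma DD_of (β : α) : DD α (FreeGroup.of β) = Finsupp.single β 1 := by
  simp [DD, Φ]

lemma DD_mul (g h : FreeGroup α) :
    DD α (g * h) = DD α g + MonoidAlgebra.of ℤ (FreeGroup α) g • DD α h := by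
  unfold DD
  rw [map_mul, SemidirectProduct.mul_left, toAdd_mul, Φ_right, φAct_toAdd]

lemma DD_inv (g : FreeGroup α) :
    DD α g⁻¹ = -(MonoidAlgebra.of ℤ (FreeGroup α) g⁻¹ • DD α g) := by
  have h := DD_mul α g⁻¹ g
  rw [inv_mul_cancel, DD_one] at h
  exact eq_neg_of_add_eq_zero_left h.symm

end Step2

namespace Step3
open FoxAux Step2

variable (α : Type*)

noncomputable def TT : (MM α) →ₗ[ZF α] ZF α :=
  Finsupp.linearCombination (ZF α)
    (fun β => MonoidAlgebra.of ℤ (FreeGroup α) (FreeGroup.of β) - 1)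

lemma TT_single (β : α) (c : ZF α) :
    TT α (Finsupp.single β c) = c * (MonoidAlgebra.of ℤ (FreeGroup α) (FreeGroup.of β) - 1) := by
  simp [TT, Finsupp.linearCombination_single, smul_eq_mul]

lemma TT_DD (g : FreeGroup α) :
    TT α (DD α g) = MonoidAlgebra.of ℤ (FreeGroup α) g - 1 := by
  induction g with
  | C1 => simp [DD_one, MonoidAlgebra.one_def]
  | of β =>
      show TT α (DD α (FreeGroup.of β)) = MonoidAlgebra.of ℤ (FreeGroup α) (FreeGroup.of β) - 1
      rw [DD_of, TT_single, one_mul]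
  | inv_of β ih =>
      show TT α (DD α (FreeGroup.of β)⁻¹) = MonoidAlgebra.of ℤ (FreeGroup α) (FreeGroup.of β)⁻¹ - 1
      have ih' : TT α (DD α (FreeGroup.of β)) = MonoidAlgebra.of ℤ (FreeGroup α) (FreeGroup.of β) - 1 := ih
      have key : MonoidAlgebra.of ℤ (FreeGroup α) (FreeGroup.of β)⁻¹ *
          MonoidAlgebra.of ℤ (FreeGroup α) (FreeGroup.of β) = 1 := by
        rw [← map_mul, inv_mul_cancel, map_one]
      rw [DD_inv, map_neg, map_smul, ih', smul_eq_mul, mul_sub, mul_one, key]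
      abel
  | mul g h ihg ihh =>
      rw [DD_mul, map_add, map_smul, ihg, ihh, smul_eq_mul, mul_sub, mul_one, map_mul]
      abel

noncomputable def Der : ZF α →ₗ[ℤ] MM α :=
  (Finsupp.lsum ℤ fun g => LinearMap.toSpanSingleton ℤ (MM α) (DD α g)) ∘ₗ
    (MonoidAlgebra.coeffLinearEquiv ℤ).toLinearMap

lemma Der_single (g : FreeGroup α) (c : ℤ) :
    Der α (MonoidAlgebra.single g c) = c • DD α g := by
  rw [show Der α (MonoidAlgebra.single g c) =
      Finsupp.lsum ℤ (fun g => LinearMap.toSpanSingleton ℤ (MM α) (DD α g)) (Finsupp.single g c)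
      from rfl, Finsupp.lsum_single, LinearMap.toSpanSingleton_apply]

lemma Der_of (g : FreeGroup α) : Der α (MonoidAlgebra.of ℤ (FreeGroup α) g) = DD α g := by
  rw [MonoidAlgebra.of_apply]
  rw [show (MonoidAlgebra.single g (1:ℤ) : ZF α) = MonoidAlgebra.single g 1 from rfl]
  rw [Der_single, one_smul]

lemma aug_of (g : FreeGroup α) : aug (FreeGroup α) (MonoidAlgebra.of ℤ (FreeGroup α) g) = 1 := by
  simp [aug]

lemma aug_single (g : FreeGroup α) (c : ℤ) :
    aug (FreeGroup α) (MonoidAlgebra.single g c) = c := by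
  have h : (MonoidAlgebra.single g c : ZF α) = c • MonoidAlgebra.of ℤ (FreeGroup α) g := by
    rw [MonoidAlgebra.of_apply]
    rw [show (MonoidAlgebra.single g (1:ℤ) : ZF α) = MonoidAlgebra.single g 1 from rfl]
    rw [MonoidAlgebra.smul_single, smul_eq_mul, mul_one]
  rw [h, map_zsmul, aug_of, smul_eq_mul, mul_one]

end Step3

namespace Step4
open FoxAux Step2 Step3

variable (α : Type*)

lemma single_eq_zsmul_of (g : FreeGroup α) (c : ℤ) :
    (MonoidAlgebra.single g c : ZF α) = c • MonoidAlgebra.of ℤ (FreeGroup α) g := by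
  rw [MonoidAlgebra.of_apply]
  rw [show (MonoidAlgebra.single g (1:ℤ) : ZF α) = MonoidAlgebra.single g 1 from rfl]
  rw [MonoidAlgebra.smul_single, smul_eq_mul, mul_one]

lemma TT_Der (w : ZF α) :
    TT α (Der α w) = w - (aug (FreeGroup α) w) • (1 : ZF α) := by
  induction w using MonoidAlgebra.induction_linear with
  | zero => simp
  | add f g hf hg =>
      rw [map_add, map_add, hf, hg, map_add, add_smul]
      exact sub_add_sub_comm _ _ _ _
  | single g c =>
      rw [Der_single, map_zsmul, TT_DD, aug_single, smul_sub, single_eq_zsmul_of]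

lemma Der_of_mul (g : FreeGroup α) (b : ZF α) :
    Der α (MonoidAlgebra.of ℤ (FreeGroup α) g * b) =
      aug (FreeGroup α) b • DD α g + MonoidAlgebra.of ℤ (FreeGroup α) g • Der α b := by
  induction b using MonoidAlgebra.induction_linear with
  | zero => simp
  | add f f' hf hf' =>
      rw [mul_add, map_add, hf, hf', map_add, map_add, add_smul, smul_add]; abel
  | single h d =>
      have e0 : (MonoidAlgebra.single h d : ZF α) = d • MonoidAlgebra.of ℤ (FreeGroup α) h :=
        single_eq_zsmul_of α h d
      rw [e0, mul_smul_comm, ← map_mul]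
      simp only [map_zsmul, Der_of, DD_mul, aug_of]
      rw [smul_eq_mul, mul_one, smul_add, smul_comm (MonoidAlgebra.of ℤ (FreeGroup α) g) d]

lemma Der_mul (a b : ZF α) :
    Der α (a * b) = aug (FreeGroup α) b • Der α a + a • Der α b := by
  induction a using MonoidAlgebra.induction_linear with
  | zero => simp
  | add f f' hf hf' =>
      rw [add_mul, map_add, hf, hf', map_add, smul_add, add_smul]; abel
  | single g c =>
      rw [single_eq_zsmul_of, smul_mul_assoc, map_zsmul, Der_of_mul, map_zsmul, Der_of,
        smul_add, smul_comm c (aug (FreeGroup α) b), smul_assoc]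

end Step4

namespace Step5
open FoxAux Step2 Step3 Step4

variable (α : Type*)

lemma mem_augIdeal_iff (w : ZF α) :
    w ∈ augIdeal (FreeGroup α) ↔ aug (FreeGroup α) w = 0 := Iff.rfl

lemma of_sub_one_mem (β : α) :
    MonoidAlgebra.of ℤ (FreeGroup α) (FreeGroup.of β) - 1 ∈ augIdeal (FreeGroup α) := by
  rw [mem_augIdeal_iff, map_sub, map_one, aug_of, sub_self]

lemma mul_augIdeal_le (A : Submodule ℤ (ZF α)) :
    A * augIdeal (FreeGroup α) ≤ augIdeal (FreeGroup α) := by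
  rw [Submodule.mul_le]
  intro a _ u hu
  rw [mem_augIdeal_iff] at hu ⊢
  rw [map_mul, hu, mul_zero]

lemma der_mem_of_mem_mul (A : Submodule ℤ (ZF α)) (hA : ∀ x ∈ A, ∀ b : ZF α, x * b ∈ A)
    (w : ZF α) (hw : w ∈ A * augIdeal (FreeGroup α)) (β : α) : Der α w β ∈ A := by
  refine Submodule.mul_induction_on hw (fun a ha u hu => ?_) (fun x y hx hy => ?_)
  · rw [Der_mul, (mem_augIdeal_iff α u).mp hu, zero_smul, zero_add, Finsupp.smul_apply,
      smul_eq_mul]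
    exact hA a ha _
  · rw [map_add, Finsupp.add_apply]
    exact A.add_mem hx hy

lemma mem_mul_of_der (C : Submodule ℤ (ZF α)) (w : ZF α) (h0 : aug (FreeGroup α) w = 0)
    (hC : ∀ β, Der α w β ∈ C) : w ∈ C * augIdeal (FreeGroup α) := by
  have hw : w = TT α (Der α w) := by rw [TT_Der, h0, zero_smul, sub_zero]
  rw [hw, TT, Finsupp.linearCombination_apply, Finsupp.sum]
  refine Submodule.sum_mem _ fun β _ => ?_
  rw [smul_eq_mul]
  exact Submodule.mul_mem_mul (hC β) (of_sub_one_mem α β)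

lemma relIdeal_rightMul (R : Subgroup (FreeGroup α)) :
    ∀ x ∈ relIdeal (FreeGroup α) R, ∀ b : ZF α, x * b ∈ relIdeal (FreeGroup α) R := by
  intro x hx b
  induction hx using Submodule.span_induction with
  | mem y hy =>
      obtain ⟨ρ, hρ, a, rfl⟩ := hy
      rw [mul_assoc]
      exact Submodule.subset_span ⟨ρ, hρ, a * b, rfl⟩
  | zero => rw [zero_mul]; exact Submodule.zero_mem _
  | add x y _ _ ihx ihy => rw [add_mul]; exact Submodule.add_mem _ ihx ihy
  | smul c x _ ih => rw [smul_mul_assoc]; exact Submodule.smul_mem _ c ih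

lemma sq_rightMul :
    ∀ x ∈ augIdeal (FreeGroup α) ^ 2, ∀ b : ZF α, x * b ∈ augIdeal (FreeGroup α) ^ 2 := by
  rw [sq]
  intro x hx b
  refine Submodule.mul_induction_on hx (fun a ha u hu => ?_) (fun y z hy hz => ?_)
  · rw [mul_assoc]
    refine Submodule.mul_mem_mul ha ?_
    rw [mem_augIdeal_iff] at hu ⊢
    rw [map_mul, hu, zero_mul]
  · rw [add_mul]; exact Submodule.add_mem _ hy hz

end Step5

/-- For a free group `F` with normal subgroup `R`: `r·f ∩ f³ = (r ∩ f²)·f`. -/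
theorem relIdeal_mul_aug_inf_cube (α : Type*) (R : Subgroup (FreeGroup α)) [R.Normal] :
    relIdeal (FreeGroup α) R * augIdeal (FreeGroup α) ⊓ augIdeal (FreeGroup α) ^ 3 =
      (relIdeal (FreeGroup α) R ⊓ augIdeal (FreeGroup α) ^ 2) * augIdeal (FreeGroup α) := by
  apply le_antisymm
  · intro w hw
    obtain ⟨h1, h2⟩ := Submodule.mem_inf.mp hw
    rw [pow_succ] at h2
    have h0 : aug (FreeGroup α) w = 0 :=
      (Step5.mem_augIdeal_iff α w).mp (Step5.mul_augIdeal_le α _ h1)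
    refine Step5.mem_mul_of_der α _ w h0 fun β => ?_
    exact Submodule.mem_inf.mpr
      ⟨Step5.der_mem_of_mem_mul α _ (Step5.relIdeal_rightMul α R) w h1 β,
       Step5.der_mem_of_mem_mul α _ (Step5.sq_rightMul α) w h2 β⟩
  · refine le_inf ?_ ?_
    · exact mul_le_mul' inf_le_left le_rfl
    · rw [pow_succ]
      exact mul_le_mul' inf_le_right le_rfl
end

section
/- Let F be a free group with normal subgroup R and G = F/R. For any n ≥ 1 there is a natural isomorphism D_n(G)/γ_n(G) ≅ (F ∩ (1 + r + f^n)) / (R·γ_n(F)), where f is the augmentation ideal of ℤ[F] and r = (R-1)ℤ[F]. -/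
section Aux
variable {G : Type*} [Group G] {H : Type*} [Group H]

lemma aug_of (g : G) : aug G (MonoidAlgebra.of ℤ G g) = 1 := by
  simp [aug]

lemma mem_augIdeal_iff (x : MonoidAlgebra ℤ G) : x ∈ augIdeal G ↔ aug G x = 0 := Iff.rfl

lemma mul_mem_augIdeal_left (u : MonoidAlgebra ℤ G) {z : MonoidAlgebra ℤ G}
    (hz : z ∈ augIdeal G) : u * z ∈ augIdeal G := by
  rw [mem_augIdeal_iff] at hz ⊢
  rw [map_mul, hz, mul_zero]

lemma mul_mem_augIdeal_right (u : MonoidAlgebra ℤ G) {z : MonoidAlgebra ℤ G}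
    (hz : z ∈ augIdeal G) : z * u ∈ augIdeal G := by
  rw [mem_augIdeal_iff] at hz ⊢
  rw [map_mul, hz, zero_mul]

lemma mul_mem_pow_left {n : ℕ} (hn : 1 ≤ n) (u : MonoidAlgebra ℤ G) {z : MonoidAlgebra ℤ G}
    (hz : z ∈ augIdeal G ^ n) : u * z ∈ augIdeal G ^ n := by
  obtain ⟨m, rfl⟩ : ∃ m, n = m + 1 := ⟨n - 1, (Nat.succ_pred_eq_of_pos hn).symm⟩
  rw [pow_succ'] at hz ⊢
  refine Submodule.mul_induction_on hz (fun a ha b hb => ?_) (fun x y hx hy => ?_)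
  · rw [← mul_assoc]
    exact Submodule.mul_mem_mul (mul_mem_augIdeal_left u ha) hb
  · rw [mul_add]; exact add_mem hx hy

lemma mul_mem_pow_right {n : ℕ} (hn : 1 ≤ n) (u : MonoidAlgebra ℤ G) {z : MonoidAlgebra ℤ G}
    (hz : z ∈ augIdeal G ^ n) : z * u ∈ augIdeal G ^ n := by
  obtain ⟨m, rfl⟩ : ∃ m, n = m + 1 := ⟨n - 1, (Nat.succ_pred_eq_of_pos hn).symm⟩
  rw [pow_succ] at hz ⊢
  refine Submodule.mul_induction_on hz (fun a ha b hb => ?_) (fun x y hx hy => ?_)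
  · rw [mul_assoc]
    exact Submodule.mul_mem_mul ha (mul_mem_augIdeal_right u hb)
  · rw [add_mul]; exact add_mem hx hy

/-- The `n`-th dimension subgroup. -/
def dimSubgroup (G : Type*) [Group G] (n : ℕ) (hn : 1 ≤ n) : Subgroup G where
  carrier := {x | MonoidAlgebra.of ℤ G x - 1 ∈ augIdeal G ^ n}
  one_mem' := by
    show MonoidAlgebra.of ℤ G 1 - 1 ∈ augIdeal G ^ n
    rw [map_one, sub_self]; exact zero_mem _
  mul_mem' := by
    intro a b ha hb
    have key : MonoidAlgebra.of ℤ G (a * b) - 1 =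
        MonoidAlgebra.of ℤ G a * (MonoidAlgebra.of ℤ G b - 1) +
          (MonoidAlgebra.of ℤ G a - 1) := by
      rw [map_mul, mul_sub, mul_one, sub_add_sub_cancel]
    simp only [Set.mem_setOf_eq] at ha hb ⊢
    rw [key]
    exact add_mem (mul_mem_pow_left hn _ hb) ha
  inv_mem' := by
    intro a ha
    simp only [Set.mem_setOf_eq] at ha ⊢
    have key : MonoidAlgebra.of ℤ G a⁻¹ - 1 =
        -(MonoidAlgebra.of ℤ G a⁻¹ * (MonoidAlgebra.of ℤ G a - 1)) := by
      rw [mul_sub, ← map_mul, inv_mul_cancel, map_one, mul_one, neg_sub]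
    rw [key]
    exact neg_mem (mul_mem_pow_left hn _ ha)

lemma mem_dimSubgroup_iff {n : ℕ} (hn : 1 ≤ n) (x : G) :
    x ∈ dimSubgroup G n hn ↔ MonoidAlgebra.of ℤ G x - 1 ∈ augIdeal G ^ n := Iff.rfl

end Aux

section Ker
variable {F : Type*} [Group F] (R : Subgroup F) [R.Normal]

/-- The induced algebra hom `ℤ[F] → ℤ[F/R]`. -/
noncomputable abbrev qAlgHom : MonoidAlgebra ℤ F →ₐ[ℤ] MonoidAlgebra ℤ (F ⧸ R) :=
  MonoidAlgebra.mapDomainAlgHom ℤ ℤ (QuotientGroup.mk' R)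

lemma qAlgHom_of (g : F) :
    qAlgHom R (MonoidAlgebra.of ℤ F g) =
      MonoidAlgebra.of ℤ (F ⧸ R) (QuotientGroup.mk' R g) := by
  simp [MonoidAlgebra.of_apply, Finsupp.mapDomain_single]

lemma qAlgHom_surjective : Function.Surjective (qAlgHom R) := by
  intro y
  induction y using MonoidAlgebra.induction_linear with
  | zero => exact ⟨0, map_zero _⟩
  | add f g hf hg =>
    obtain ⟨x, hx⟩ := hf; obtain ⟨y, hy⟩ := hg
    exact ⟨x + y, by rw [map_add, hx, hy]⟩
  | single h c =>
    obtain ⟨g, hg⟩ := QuotientGroup.mk'_surjective R h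
    refine ⟨MonoidAlgebra.single g c, ?_⟩
    rw [MonoidAlgebra.mapDomainAlgHom_apply, MonoidAlgebra.mapDomain_single, ← hg,
      QuotientGroup.mk'_apply]

lemma aug_qAlgHom (x : MonoidAlgebra ℤ F) : aug (F ⧸ R) (qAlgHom R x) = aug F x := by
  have h : (aug (F ⧸ R)).comp (qAlgHom R) = aug F := by
    apply MonoidAlgebra.algHom_ext
    intro g
    show aug (F ⧸ R) (qAlgHom R (MonoidAlgebra.of ℤ F g)) = aug F (MonoidAlgebra.of ℤ F g)
    rw [qAlgHom_of, aug_of, aug_of]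
    exact Subsingleton.elim _ _
  rw [← h]; rfl

lemma relIdeal_le_ker : ∀ x ∈ relIdeal F R, qAlgHom R x = 0 := by
  intro x hx
  refine Submodule.span_induction ?_ ?_ ?_ ?_ hx
  · rintro y ⟨ρ, hρ, a, rfl⟩
    rw [map_mul, map_sub, map_one, qAlgHom_of]
    have h1 : QuotientGroup.mk' R ρ = 1 := (QuotientGroup.eq_one_iff ρ).mpr hρ
    rw [h1, map_one, sub_self, zero_mul]
  · exact map_zero _
  · intro y z _ _ hy hz; rw [map_add, hy, hz, add_zero]
  · intro c y _ hy; rw [map_smul, hy, smul_zero]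

/-- Linear section map `ℤ[F] → ℤ[F]`, sending `g` to the chosen representative of `gR`. -/
noncomputable def secMap : MonoidAlgebra ℤ F →ₗ[ℤ] MonoidAlgebra ℤ F :=
  MonoidAlgebra.mapDomainLinearMap ℤ ℤ (fun g => (QuotientGroup.mk g : F ⧸ R).out)

lemma secMap_single (g : F) (c : ℤ) :
    secMap R (MonoidAlgebra.single g c) =
      MonoidAlgebra.single ((QuotientGroup.mk g : F ⧸ R).out) c :=
  MonoidAlgebra.mapDomainLinearMap_single _ _ _

lemma secMap_eq_zero {x : MonoidAlgebra ℤ F} (hx : qAlgHom R x = 0) : secMap R x = 0 := by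
  have h1 : secMap R x =
      MonoidAlgebra.mapDomain (fun q : F ⧸ R => q.out) (qAlgHom R x) := by
    ext; simp [secMap]; rw [← Finsupp.mapDomain_comp]; rfl
  rw [h1, hx]
  exact MonoidAlgebra.mapDomain_zero _

lemma sub_secMap_mem_relIdeal (x : MonoidAlgebra ℤ F) :
    x - secMap R x ∈ relIdeal F R := by
  induction x using MonoidAlgebra.induction_linear with
  | zero => rw [map_zero, sub_zero]; exact zero_mem _
  | add f g hf hg =>
    rw [map_add, add_sub_add_comm]
    exact add_mem hf hg
  | single g c =>
    rw [secMap_single]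
    set g' : F := ((QuotientGroup.mk g : F ⧸ R)).out with hg'
    have key : (MonoidAlgebra.single g c : MonoidAlgebra ℤ F) - MonoidAlgebra.single g' c =
        c • (MonoidAlgebra.of ℤ F g - MonoidAlgebra.of ℤ F g') := by
      simp [smul_sub, MonoidAlgebra.smul_single']
    rw [key]
    refine Submodule.smul_mem _ _ (Submodule.subset_span ?_)
    refine ⟨g * g'⁻¹, ?_, MonoidAlgebra.of ℤ F g', ?_⟩
    · rw [← QuotientGroup.eq_one_iff, QuotientGroup.mk_mul, QuotientGroup.mk_inv, hg',
        QuotientGroup.out_eq', mul_inv_cancel]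
    · rw [sub_mul, one_mul, ← map_mul, inv_mul_cancel_right]

lemma mem_relIdeal_iff (x : MonoidAlgebra ℤ F) :
    x ∈ relIdeal F R ↔ qAlgHom R x = 0 := by
  constructor
  · exact relIdeal_le_ker R x
  · intro hx
    have h1 := sub_secMap_mem_relIdeal R x
    rwa [secMap_eq_zero R hx, sub_zero] at h1

lemma map_augIdeal :
    Submodule.map (qAlgHom R).toLinearMap (augIdeal F) = augIdeal (F ⧸ R) := by
  apply le_antisymm
  · rw [Submodule.map_le_iff_le_comap]
    intro x hx
    simp only [Submodule.mem_comap, AlgHom.toLinearMap_apply]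
    rw [mem_augIdeal_iff] at hx ⊢
    rw [aug_qAlgHom, hx]
  · intro y hy
    obtain ⟨x, rfl⟩ := qAlgHom_surjective R y
    refine Submodule.mem_map.mpr ⟨x, ?_, rfl⟩
    rw [mem_augIdeal_iff] at hy ⊢
    rwa [aug_qAlgHom] at hy

lemma map_augIdeal_pow (n : ℕ) :
    Submodule.map (qAlgHom R).toLinearMap (augIdeal F ^ n) = augIdeal (F ⧸ R) ^ n := by
  rw [Submodule.map_pow, map_augIdeal]

lemma key_iff (n : ℕ) (w : F) :
    MonoidAlgebra.of ℤ F w - 1 ∈ relIdeal F R ⊔ augIdeal F ^ n ↔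
      MonoidAlgebra.of ℤ (F ⧸ R) (QuotientGroup.mk' R w) - 1 ∈ augIdeal (F ⧸ R) ^ n := by
  constructor
  · intro h
    obtain ⟨a, ha, b, hb, hab⟩ := Submodule.mem_sup.mp h
    have h1 : MonoidAlgebra.of ℤ (F ⧸ R) (QuotientGroup.mk' R w) - 1 = qAlgHom R b := by
      rw [← qAlgHom_of, ← map_one (qAlgHom R), ← map_sub, ← hab, map_add,
        (mem_relIdeal_iff R a).mp ha, zero_add]
    rw [h1, ← map_augIdeal_pow R n]
    exact Submodule.mem_map.mpr ⟨b, hb, rfl⟩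
  · intro h
    rw [← map_augIdeal_pow R n] at h
    obtain ⟨b, hb, hb2⟩ := Submodule.mem_map.mp h
    rw [AlgHom.toLinearMap_apply] at hb2
    apply Submodule.mem_sup.mpr
    refine ⟨MonoidAlgebra.of ℤ F w - 1 - b, ?_, b, hb, sub_add_cancel _ _⟩
    rw [mem_relIdeal_iff, map_sub, hb2, map_sub, map_one, qAlgHom_of, sub_self]

end Ker

section Grp
variable {F : Type*} [Group F] {H : Type*} [Group H]

lemma map_lowerCentralSeries_eq (f : F →* H) (hf : Function.Surjective f) (m : ℕ) :
    Subgroup.map f ((⊤ : Subgroup F).lowerCentralSeries m) = (⊤ : Subgroup H).lowerCentralSeries m := by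
  induction m with
  | zero => exact Subgroup.map_top_of_surjective f hf
  | succ m ih =>
    show Subgroup.map f ⁅(⊤ : Subgroup F).lowerCentralSeries m, ⊤⁆ =
      ⁅(⊤ : Subgroup H).lowerCentralSeries m, ⊤⁆
    rw [Subgroup.map_commutator, ih, Subgroup.map_top_of_surjective f hf]

end Grp

/-- For `G = F/R` and `n ≥ 1` there is a natural isomorphism
`D_n(G)/γ_n(G) ≅ (F ∩ (1 + r + f^n))/(R·γ_n(F))`, induced by the quotient map `F → G`.
Both quotients are realized as the images of the respective subgroups in
`G/γ_n(G)` resp. `F/(R·γ_n(F))`. -/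
theorem dimensionQuotient_iso (α : Type*) (R : Subgroup (FreeGroup α)) [R.Normal]
    (n : ℕ) (hn : 1 ≤ n) :
    ∃ D : Subgroup (FreeGroup α ⧸ R),
      (∀ x : FreeGroup α ⧸ R, x ∈ D ↔
          MonoidAlgebra.of ℤ (FreeGroup α ⧸ R) x - 1 ∈ augIdeal (FreeGroup α ⧸ R) ^ n) ∧
      ∃ W : Subgroup (FreeGroup α),
        (∀ w : FreeGroup α, w ∈ W ↔
            MonoidAlgebra.of ℤ (FreeGroup α) w - 1 ∈
              relIdeal (FreeGroup α) R ⊔ augIdeal (FreeGroup α) ^ n) ∧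
        ∃ e : Subgroup.map
                (QuotientGroup.mk' (R ⊔ (⊤ : Subgroup (FreeGroup α)).lowerCentralSeries (n - 1))) W ≃*
              Subgroup.map
                (QuotientGroup.mk' ((⊤ : Subgroup (FreeGroup α ⧸ R)).lowerCentralSeries (n - 1))) D,
          ∀ (w : FreeGroup α) (hw : w ∈ W),
            (e ⟨QuotientGroup.mk' (R ⊔ (⊤ : Subgroup (FreeGroup α)).lowerCentralSeries (n - 1)) w,
                  Subgroup.mem_map_of_mem _ hw⟩ :
                (FreeGroup α ⧸ R) ⧸ (⊤ : Subgroup (FreeGroup α ⧸ R)).lowerCentralSeries (n - 1)) =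
              QuotientGroup.mk' ((⊤ : Subgroup (FreeGroup α ⧸ R)).lowerCentralSeries (n - 1))
                (QuotientGroup.mk' R w) := by
  set F := FreeGroup α
  set G := F ⧸ R
  set π : F →* G := QuotientGroup.mk' R with hπ
  set m : ℕ := n - 1 with hm
  set L : Subgroup G := (⊤ : Subgroup G).lowerCentralSeries m with hL
  set K : Subgroup F := R ⊔ (⊤ : Subgroup F).lowerCentralSeries m with hK
  set D : Subgroup G := dimSubgroup G n hn with hD
  set W : Subgroup F := D.comap π with hW
  refine ⟨D, fun x => Iff.rfl, W, ?_, ?_⟩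
  · intro w
    rw [hW, Subgroup.mem_comap, mem_dimSubgroup_iff hn, key_iff R n w]
  · -- construct the isomorphism
    set θ : F →* G ⧸ L := (QuotientGroup.mk' L).comp π with hθdef
    have hθ : Function.Surjective θ :=
      (QuotientGroup.mk'_surjective L).comp (QuotientGroup.mk'_surjective R)
    have hker : θ.ker = K := by
      rw [hθdef, ← MonoidHom.comap_ker, QuotientGroup.ker_mk', hL,
        ← map_lowerCentralSeries_eq π (QuotientGroup.mk'_surjective R) m,
        Subgroup.comap_map_eq, QuotientGroup.ker_mk', hK, sup_comm]
    set f₀ : F ⧸ K →* G ⧸ L :=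
      QuotientGroup.lift K θ (fun x hx => by rw [← hker] at hx; exact hx) with hf₀
    have hsurj : Function.Surjective f₀ := by
      intro y
      obtain ⟨x, hx⟩ := hθ y
      exact ⟨QuotientGroup.mk x, hx⟩
    have hinj : Function.Injective f₀ := by
      rw [← MonoidHom.ker_eq_bot_iff]
      rw [Subgroup.eq_bot_iff_forall]
      intro x hx
      induction x using QuotientGroup.induction_on with
      | H w =>
        rw [MonoidHom.mem_ker] at hx
        have hw : w ∈ θ.ker := hx
        rw [hker] at hw
        exact (QuotientGroup.eq_one_iff w).mpr hw
    set E : (F ⧸ K) ≃* (G ⧸ L) := MulEquiv.ofBijective f₀ ⟨hinj, hsurj⟩ with hE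
    have hmapW : Subgroup.map π W = D :=
      Subgroup.map_comap_eq_self_of_surjective (QuotientGroup.mk'_surjective R) D
    have hcomp : E.toMonoidHom.comp (QuotientGroup.mk' K) = (QuotientGroup.mk' L).comp π := by
      ext w; rfl
    have hmap : Subgroup.map E.toMonoidHom (Subgroup.map (QuotientGroup.mk' K) W) =
        Subgroup.map (QuotientGroup.mk' L) D := by
      rw [Subgroup.map_map, hcomp, ← Subgroup.map_map, hmapW]
    refine ⟨(MulEquiv.subgroupMap E _).trans (MulEquiv.subgroupCongr hmap), ?_⟩
    intro w hw
    rfl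
end

section
/- Let F be a free group with normal subgroup R and G = F/R, n ≥ 1. Then the subgroup (R ∩ (1 + rf + f^n)) / (γ_2(R)(R ∩ γ_n(F))) is central in (F ∩ (1 + rf + f^n)) / (γ_2(R)γ_n(F)). -/
open scoped commutatorElement

namespace DQAux

open MonoidAlgebra Submodule

variable {F : Type*} [Group F]

local notation "A" => MonoidAlgebra ℤ F

lemma mem_augIdeal_iff {x : A} : x ∈ augIdeal F ↔ aug F x = 0 := by
  simp [augIdeal, RingHom.mem_ker, Submodule.restrictScalars_mem]

lemma aug_of (g : F) : aug F (of ℤ F g) = 1 := by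
  simp [aug, MonoidAlgebra.lift_of]

lemma of_sub_one_mem_augIdeal (g : F) : of ℤ F g - 1 ∈ augIdeal F := by
  rw [mem_augIdeal_iff, map_sub, map_one, aug_of, sub_self]

lemma augIdeal_mul_right {x : A} (hx : x ∈ augIdeal F) (y : A) : x * y ∈ augIdeal F := by
  rw [mem_augIdeal_iff] at hx ⊢
  rw [map_mul, hx, zero_mul]

lemma f_mul_f_le : augIdeal F * augIdeal F ≤ (augIdeal F : Submodule ℤ A) :=
  Submodule.mul_le.mpr fun m hm n _ => augIdeal_mul_right hm n

lemma augIdeal_le_span : augIdeal F ≤ Submodule.span ℤ {x | ∃ g : F, x = of ℤ F g - 1} := by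
  intro x hx
  rw [mem_augIdeal_iff] at hx
  have key : ∀ y : A, y - (aug F y) • (1 : A) ∈ Submodule.span ℤ {x | ∃ g : F, x = of ℤ F g - 1} := by
    intro y
    induction y using MonoidAlgebra.induction_on with
    | of g =>
        have : aug F (of ℤ F g) = 1 := aug_of g
        rw [this, one_smul]
        exact subset_span ⟨g, rfl⟩
    | add f g hf hg =>
        have : (f + g) - (aug F (f + g)) • (1 : A)
            = (f - aug F f • (1 : A)) + (g - aug F g • (1 : A)) := by
          rw [map_add]; module
        rw [this]; exact add_mem hf hg
    | smul c f hf =>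
        have : (c • f) - (aug F (c • f)) • (1 : A) = c • (f - aug F f • (1 : A)) := by
          rw [map_smul, smul_eq_mul]; module
        rw [this]; exact smul_mem _ _ hf
  have h2 := key x
  rwa [hx, zero_smul, sub_zero] at h2

lemma of_sub_one_mem_relIdeal {H : Subgroup F} {w : F} (hw : w ∈ H) :
    of ℤ F w - 1 ∈ relIdeal F H :=
  Submodule.subset_span ⟨w, hw, 1, (mul_one _).symm⟩

lemma relIdeal_mono {H K : Subgroup F} (h : H ≤ K) : relIdeal F H ≤ relIdeal F K :=
  Submodule.span_mono (fun x ⟨ρ, hρ, a, hx⟩ => ⟨ρ, h hρ, a, hx⟩)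

lemma relIdeal_mul_right {H : Subgroup F} {x : A} (hx : x ∈ relIdeal F H) (y : A) :
    x * y ∈ relIdeal F H := by
  simp only [relIdeal] at hx
  induction hx using Submodule.span_induction with
  | mem x hx =>
      obtain ⟨ρ, hρ, a, rfl⟩ := hx
      rw [mul_assoc]
      exact Submodule.subset_span ⟨ρ, hρ, a * y, rfl⟩
  | zero => rw [zero_mul]; exact zero_mem _
  | add a b _ _ ha hb => rw [add_mul]; exact add_mem ha hb
  | smul c a _ ha => rw [smul_mul_assoc]; exact Submodule.smul_mem _ _ ha

lemma relIdeal_le_augIdeal (H : Subgroup F) : relIdeal F H ≤ augIdeal F := by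
  rw [relIdeal, Submodule.span_le]
  rintro x ⟨ρ, hρ, a, rfl⟩
  exact augIdeal_mul_right (of_sub_one_mem_augIdeal ρ) a

lemma rf_mul_right {H : Subgroup F} {x : A}
    (hx : x ∈ relIdeal F H * augIdeal F) (y : A) :
    x * y ∈ relIdeal F H * augIdeal F := by
  refine Submodule.mul_induction_on (C := fun z => z * y ∈ relIdeal F H * augIdeal F) hx ?_ ?_
  · intro m hm n hn
    rw [mul_assoc]; exact Submodule.mul_mem_mul hm (augIdeal_mul_right hn y)
  · intro a b ha hb
    rw [add_mul]; exact add_mem ha hb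

lemma key_identity (g w : F) (a : A) :
    (of ℤ F g - 1) * ((of ℤ F w - 1) * a) =
      (of ℤ F (g * w * g⁻¹) - 1) * ((of ℤ F g - 1) * a)
        + (of ℤ F ⁅g, w⁆ - 1) * (of ℤ F w * a) := by
  have h1 : of ℤ F (g * w * g⁻¹) * of ℤ F g = of ℤ F g * of ℤ F w := by
    rw [← map_mul, ← map_mul]; congr 1; group
  have h2 : of ℤ F ⁅g, w⁆ * of ℤ F w = of ℤ F (g * w * g⁻¹) := by
    rw [← map_mul]; congr 1
    rw [commutatorElement_def]; group
  have expand : (of ℤ F (g * w * g⁻¹) - 1) * ((of ℤ F g - 1) * a)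
        + (of ℤ F ⁅g, w⁆ - 1) * (of ℤ F w * a)
      = (of ℤ F (g * w * g⁻¹) * of ℤ F g) * a - of ℤ F (g * w * g⁻¹) * a
        - of ℤ F g * a + a + (of ℤ F ⁅g, w⁆ * of ℤ F w) * a - of ℤ F w * a := by
    noncomm_ring
  rw [expand, h1, h2]
  noncomm_ring

lemma f_mul_relIdeal (H : Subgroup F) [hN : H.Normal] :
    augIdeal F * relIdeal F H ≤
      relIdeal F H * augIdeal F ⊔ relIdeal F ⁅(⊤ : Subgroup F), H⁆ := by
  rw [Submodule.mul_le]
  intro x hx y hy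
  have hx' := augIdeal_le_span hx
  clear hx
  induction hx' using Submodule.span_induction with
  | mem x hx =>
      obtain ⟨g, rfl⟩ := hx
      simp only [relIdeal] at hy
      induction hy using Submodule.span_induction with
      | mem y hy =>
          obtain ⟨w, hw, a, rfl⟩ := hy
          rw [key_identity]
          refine add_mem (Submodule.mem_sup_left ?_) (Submodule.mem_sup_right ?_)
          · exact Submodule.mul_mem_mul
              (of_sub_one_mem_relIdeal (hN.conj_mem w hw g))
              (augIdeal_mul_right (of_sub_one_mem_augIdeal g) a)
          · exact Submodule.subset_span ⟨⁅g, w⁆,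
              Subgroup.commutator_mem_commutator (Subgroup.mem_top g) hw, of ℤ F w * a, rfl⟩
      | zero => rw [mul_zero]; exact zero_mem _
      | add a b _ _ ha hb => rw [mul_add]; exact add_mem ha hb
      | smul c a _ ha => rw [mul_smul_comm]; exact Submodule.smul_mem _ _ ha
  | zero => rw [zero_mul]; exact zero_mem _
  | add a b _ _ ha hb => rw [add_mul]; exact add_mem ha hb
  | smul c a _ ha => rw [smul_mul_assoc]; exact Submodule.smul_mem _ _ ha

def LL : ℕ → Subgroup F → Subgroup F
  | 0, H => H
  | (m + 1), H => LL m ⁅(⊤ : Subgroup F), H⁆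

lemma LL_normal : ∀ (m : ℕ) (H : Subgroup F), H.Normal → (LL m H).Normal := by
  intro m
  induction m with
  | zero => intro H hH; exact hH
  | succ m ih => intro H _; exact ih _ (Subgroup.commutator_normal ⊤ H)

lemma LL_le : ∀ (m : ℕ) (H : Subgroup F), H.Normal → LL m H ≤ H := by
  intro m
  induction m with
  | zero => intro H _; exact le_refl _
  | succ m ih =>
      intro H hH
      calc LL m ⁅(⊤ : Subgroup F), H⁆ ≤ ⁅(⊤ : Subgroup F), H⁆ :=
            ih _ (Subgroup.commutator_normal ⊤ H)
        _ ≤ H := Subgroup.commutator_le_right ⊤ H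

lemma lcs_succ' (k : ℕ) :
    (⊤ : Subgroup F).lowerCentralSeries (k + 1) = ⁅(⊤ : Subgroup F).lowerCentralSeries k, (⊤ : Subgroup F)⁆ := rfl

lemma LL_le_lcs : ∀ (m k : ℕ) (H : Subgroup F), H ≤ (⊤ : Subgroup F).lowerCentralSeries k →
    LL m H ≤ (⊤ : Subgroup F).lowerCentralSeries (k + m) := by
  intro m
  induction m with
  | zero => intro k H h; exact h
  | succ m ih =>
      intro k H h
      have h1 : ⁅(⊤ : Subgroup F), H⁆ ≤ (⊤ : Subgroup F).lowerCentralSeries (k + 1) := by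
        rw [Subgroup.commutator_comm, lcs_succ' k]
        exact Subgroup.commutator_mono h (le_refl _)
      have h2 := ih (k + 1) _ h1
      have harith : k + 1 + m = k + (m + 1) := by omega
      rwa [harith] at h2

lemma pow_f_mul_relIdeal : ∀ (m : ℕ) (H : Subgroup F), H.Normal →
    augIdeal F ^ m * relIdeal F H ≤ relIdeal F H * augIdeal F ⊔ relIdeal F (LL m H) := by
  intro m
  induction m with
  | zero =>
      intro H _
      rw [pow_zero, Submodule.one_mul]
      exact le_sup_right
  | succ m ih =>
      intro H hH
      have e1 : augIdeal F ^ (m + 1) * relIdeal F H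
          = augIdeal F ^ m * (augIdeal F * relIdeal F H) := by
        rw [pow_succ, mul_assoc]
      rw [e1]
      calc augIdeal F ^ m * (augIdeal F * relIdeal F H)
          ≤ augIdeal F ^ m * (relIdeal F H * augIdeal F ⊔ relIdeal F ⁅(⊤ : Subgroup F), H⁆) :=
            mul_le_mul_right (f_mul_relIdeal H) _
        _ = augIdeal F ^ m * (relIdeal F H * augIdeal F)
              ⊔ augIdeal F ^ m * relIdeal F ⁅(⊤ : Subgroup F), H⁆ := Submodule.mul_sup _ _ _
        _ ≤ relIdeal F H * augIdeal F ⊔ relIdeal F (LL (m + 1) H) := by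
            apply sup_le
            · -- fᵐ * (rH * f) = (fᵐ * rH) * f ≤ (rH*f ⊔ rI (LL m H)) * f ≤ rH * f
              have e2 : augIdeal F ^ m * (relIdeal F H * augIdeal F)
                  = (augIdeal F ^ m * relIdeal F H) * augIdeal F := (mul_assoc _ _ _).symm
              rw [e2]
              refine le_trans (mul_le_mul_left (ih H hH) _) ?_
              rw [Submodule.sup_mul]
              apply le_sup_of_le_left
              apply sup_le
              · rw [mul_assoc]
                exact mul_le_mul_right f_mul_f_le _
              · exact mul_le_mul_left (relIdeal_mono (LL_le m H hH)) _
            · have h3 := ih ⁅(⊤ : Subgroup F), H⁆ (Subgroup.commutator_normal ⊤ H)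
              refine le_trans h3 (sup_le ?_ le_sup_right)
              exact le_sup_of_le_left (mul_le_mul_left
                  (relIdeal_mono (Subgroup.commutator_le_right ⊤ H)) _)



section Phi

variable (R : Subgroup F) [R.Normal]

/-- Section of `F → F ⧸ R` composed into an `R`-valued "remainder". -/
noncomputable def rho (g : F) : R :=
  ⟨g * ((QuotientGroup.mk g : F ⧸ R).out)⁻¹, by
    have h1 : (QuotientGroup.mk ((QuotientGroup.mk g : F ⧸ R).out) : F ⧸ R)
        = QuotientGroup.mk g := QuotientGroup.out_eq' _
    have h2 : ((QuotientGroup.mk g : F ⧸ R).out)⁻¹ * g ∈ R := QuotientGroup.eq.mp h1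
    have h3 := Subgroup.Normal.conj_mem ‹R.Normal› _ h2 g
    rwa [show g * (((QuotientGroup.mk g : F ⧸ R).out)⁻¹ * g) * g⁻¹
        = g * ((QuotientGroup.mk g : F ⧸ R).out)⁻¹ by group] at h3⟩

noncomputable def phiv : F → Additive (Abelianization R) :=
  fun g => Additive.ofMul (Abelianization.of (rho R g))

noncomputable def phi : MonoidAlgebra ℤ F →ₗ[ℤ] Additive (Abelianization R) :=
  (Finsupp.linearCombination ℤ (phiv R)).comp (MonoidAlgebra.coeffLinearEquiv ℤ).toLinearMap

lemma phi_single (g : F) (c : ℤ) :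
    phi R (MonoidAlgebra.single g c) = c • phiv R g :=
  Finsupp.linearCombination_single _ _ _

lemma phi_of (g : F) : phi R (of ℤ F g) = phiv R g := by
  rw [MonoidAlgebra.of_apply, phi_single, one_smul]

lemma rho_mul {ρ : F} (hρ : ρ ∈ R) (g : F) :
    rho R (ρ * g) = ⟨ρ, hρ⟩ * rho R g := by
  have e : (QuotientGroup.mk (ρ * g) : F ⧸ R) = QuotientGroup.mk g := by
    apply QuotientGroup.eq.mpr
    rw [show (ρ * g)⁻¹ * g = g⁻¹ * ρ⁻¹ * (g⁻¹)⁻¹ by group]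
    exact Subgroup.Normal.conj_mem ‹R.Normal› _ (inv_mem hρ) g⁻¹
  apply Subtype.ext
  show (ρ * g) * ((QuotientGroup.mk (ρ * g) : F ⧸ R).out)⁻¹
      = ρ * (g * ((QuotientGroup.mk g : F ⧸ R).out)⁻¹)
  rw [e, mul_assoc]

lemma phi_sub_one_mul {ρ : F} (hρ : ρ ∈ R) (x : MonoidAlgebra ℤ F) :
    phi R ((of ℤ F ρ - 1) * x)
      = aug F x • Additive.ofMul (Abelianization.of (⟨ρ, hρ⟩ : R)) := by
  induction x using MonoidAlgebra.induction_on with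
  | of g =>
      rw [sub_mul, one_mul, ← map_mul, map_sub, phi_of, phi_of, aug_of, one_smul]
      show Additive.ofMul (Abelianization.of (rho R (ρ * g)))
          - Additive.ofMul (Abelianization.of (rho R g)) = _
      rw [rho_mul R hρ g, map_mul, ofMul_mul]
      abel
  | add f g hf hg =>
      rw [mul_add, map_add, hf, hg, map_add, add_smul]
  | smul c f hf =>
      rw [mul_smul_comm, map_smul, hf, map_smul, smul_smul, smul_eq_mul]

lemma phi_rf_eq_zero {x : MonoidAlgebra ℤ F}
    (hx : x ∈ relIdeal F R * augIdeal F) : phi R x = 0 := by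
  refine Submodule.mul_induction_on (C := fun z => phi R z = 0) hx ?_ ?_
  · intro m hm n hn
    simp only [relIdeal] at hm
    induction hm using Submodule.span_induction with
    | mem m hmm =>
        obtain ⟨ρ, hρ, a, rfl⟩ := hmm
        rw [mul_assoc, phi_sub_one_mul R hρ, map_mul]
        rw [mem_augIdeal_iff] at hn
        rw [hn, mul_zero, zero_smul]
    | zero => rw [zero_mul, map_zero]
    | add a b _ _ ha hb => rw [add_mul, map_add, ha, hb, add_zero]
    | smul c a _ ha => rw [smul_mul_assoc, map_smul, ha, smul_zero]
  · intro a b ha hb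
    rw [map_add, ha, hb, add_zero]

/-- The classical lemma: `R ∩ (1 + r·f) ⊆ [R,R]`. -/
lemma mem_commutator_of_sub_one_mem_rf {z : F} (hz : z ∈ R)
    (h : of ℤ F z - 1 ∈ relIdeal F R * augIdeal F) : z ∈ ⁅R, R⁆ := by
  have h0 : phi R (of ℤ F z - 1) = 0 := phi_rf_eq_zero R h
  have h1 : phi R (1 : MonoidAlgebra ℤ F) = phiv R 1 := by
    rw [MonoidAlgebra.one_def, phi_single, one_smul]
  rw [map_sub, phi_of, h1, sub_eq_zero] at h0
  have h2 : Abelianization.of (rho R z) = Abelianization.of (rho R 1) :=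
    Additive.ofMul.injective h0
  have e : (QuotientGroup.mk z : F ⧸ R) = QuotientGroup.mk 1 := by
    apply QuotientGroup.eq.mpr
    rw [mul_one]
    exact inv_mem hz
  have h3 : rho R z * (rho R 1)⁻¹ = ⟨z, hz⟩ := by
    apply Subtype.ext
    show (z * ((QuotientGroup.mk z : F ⧸ R).out)⁻¹)
        * (1 * ((QuotientGroup.mk (1 : F) : F ⧸ R).out)⁻¹)⁻¹ = z
    rw [e]
    group
  have h4 : Abelianization.of (rho R z * (rho R 1)⁻¹) = 1 := by
    rw [map_mul, map_inv, h2, mul_inv_cancel]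
  rw [h3] at h4
  have h5 : (⟨z, hz⟩ : R) ∈ commutator R := (QuotientGroup.eq_one_iff _).mp h4
  have h6 : Subgroup.map R.subtype (commutator R) = ⁅R, R⁆ := by
    rw [commutator_def, Subgroup.map_commutator, ← MonoidHom.range_eq_map,
      Subgroup.range_subtype]
  exact h6 ▸ ⟨⟨z, hz⟩, h5, rfl⟩

end Phi

section PowerCongruence

variable {R : Subgroup F} [R.Normal]

lemma zsmul_sub_zpow {w : F} (hw : w ∈ R) (k : ℤ) :
    k • (of ℤ F w - 1) - (of ℤ F (w ^ k) - 1) ∈ relIdeal F R * augIdeal F := by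
  induction k using Int.induction_on with
  | zero => simp [MonoidAlgebra.one_def]
  | succ i ih =>
      have hde : ((i : ℤ) + 1) • (of ℤ F w - 1) - (of ℤ F (w ^ ((i : ℤ) + 1)) - 1)
          = ((i : ℤ) • (of ℤ F w - 1) - (of ℤ F (w ^ (i : ℤ)) - 1))
            + (-((of ℤ F (w ^ (i : ℤ)) - 1) * (of ℤ F w - 1))) := by
        rw [zpow_add_one, map_mul, add_smul, one_smul]
        simp only [zsmul_eq_mul]
        noncomm_ring
      rw [hde]
      exact add_mem ih (neg_mem (Submodule.mul_mem_mul
        (of_sub_one_mem_relIdeal (Subgroup.zpow_mem R hw _)) (of_sub_one_mem_augIdeal w)))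
  | pred i ih =>
      have hpow : w ^ (-(i : ℤ)) = w ^ (-(i : ℤ) - 1) * w := by
        rw [← zpow_add_one]
        norm_num
      have hde : (-(i : ℤ) - 1) • (of ℤ F w - 1) - (of ℤ F (w ^ (-(i : ℤ) - 1)) - 1)
          = ((-(i : ℤ)) • (of ℤ F w - 1) - (of ℤ F (w ^ (-(i : ℤ))) - 1))
            + ((of ℤ F (w ^ (-(i : ℤ) - 1)) - 1) * (of ℤ F w - 1)) := by
        rw [hpow, map_mul, sub_smul, one_smul]
        simp only [zsmul_eq_mul]
        noncomm_ring
      rw [hde]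
      exact add_mem ih (Submodule.mul_mem_mul
        (of_sub_one_mem_relIdeal (Subgroup.zpow_mem R hw _)) (of_sub_one_mem_augIdeal w))

/-- Every element of `relIdeal H` is congruent to some `w - 1`, `w ∈ H`, modulo `r·f`. -/
lemma exists_group_elt_congruent {H : Subgroup F} (hH : H ≤ R)
    {q : MonoidAlgebra ℤ F} (hq : q ∈ relIdeal F H) :
    ∃ w ∈ H, q - (of ℤ F w - 1) ∈ relIdeal F R * augIdeal F := by
  simp only [relIdeal] at hq
  induction hq using Submodule.span_induction with
  | mem q hqq =>
      obtain ⟨w, hw, a, rfl⟩ := hqq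
      refine ⟨w ^ (aug F a), Subgroup.zpow_mem H hw _, ?_⟩
      have hde : (of ℤ F w - 1) * a - (of ℤ F (w ^ (aug F a)) - 1)
          = (of ℤ F w - 1) * (a - aug F a • 1)
            + (aug F a • (of ℤ F w - 1) - (of ℤ F (w ^ (aug F a)) - 1)) := by
        rw [mul_sub, mul_smul_comm, mul_one]
        abel
      rw [hde]
      refine add_mem (Submodule.mul_mem_mul (of_sub_one_mem_relIdeal (hH hw)) ?_)
        (zsmul_sub_zpow (hH hw) _)
      rw [mem_augIdeal_iff, map_sub, map_smul, map_one, smul_eq_mul, mul_one, sub_self]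
  | zero => exact ⟨1, one_mem H, by simp [MonoidAlgebra.one_def]⟩
  | add q₁ q₂ _ _ h₁ h₂ =>
      obtain ⟨w₁, hw₁, hc₁⟩ := h₁
      obtain ⟨w₂, hw₂, hc₂⟩ := h₂
      refine ⟨w₁ * w₂, mul_mem hw₁ hw₂, ?_⟩
      have hde : (q₁ + q₂) - (of ℤ F (w₁ * w₂) - 1)
          = (q₁ - (of ℤ F w₁ - 1)) + (q₂ - (of ℤ F w₂ - 1))
            + (-((of ℤ F w₁ - 1) * (of ℤ F w₂ - 1))) := by
        rw [map_mul]
        noncomm_ring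
      rw [hde]
      exact add_mem (add_mem hc₁ hc₂) (neg_mem (Submodule.mul_mem_mul
        (of_sub_one_mem_relIdeal (hH hw₁)) (of_sub_one_mem_augIdeal w₂)))
  | smul c q _ h =>
      obtain ⟨w, hw, hc⟩ := h
      refine ⟨w ^ c, Subgroup.zpow_mem H hw _, ?_⟩
      have hde : c • q - (of ℤ F (w ^ c) - 1)
          = c • (q - (of ℤ F w - 1)) + (c • (of ℤ F w - 1) - (of ℤ F (w ^ c) - 1)) := by
        module
      rw [hde]
      exact add_mem (Submodule.smul_mem _ _ hc) (zsmul_sub_zpow (hH hw) c)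

end PowerCongruence

end DQAux

open DQAux in
/-- For `G = F/R` and `n ≥ 1`, the subgroup `(R ∩ (1 + rf + f^n))/(γ_2(R)(R ∩ γ_n(F)))`
is central in `(F ∩ (1 + rf + f^n))/(γ_2(R)γ_n(F))`: any `u ∈ R ∩ (1 + rf + f^n)`
commutes with any `v ∈ F ∩ (1 + rf + f^n)` modulo `γ_2(R)γ_n(F)`. -/
theorem dimensionQuotient_central (α : Type*) (R : Subgroup (FreeGroup α)) [R.Normal]
    (n : ℕ) (hn : 1 ≤ n) (u v : FreeGroup α) (hu : u ∈ R)
    (hu' : MonoidAlgebra.of ℤ (FreeGroup α) u - 1 ∈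
      relIdeal (FreeGroup α) R * augIdeal (FreeGroup α) ⊔ augIdeal (FreeGroup α) ^ n)
    (hv : MonoidAlgebra.of ℤ (FreeGroup α) v - 1 ∈
      relIdeal (FreeGroup α) R * augIdeal (FreeGroup α) ⊔ augIdeal (FreeGroup α) ^ n) :
    ⁅u, v⁆ ∈ ⁅R, R⁆ ⊔ (⊤ : Subgroup (FreeGroup α)).lowerCentralSeries (n - 1) := by
  obtain ⟨c, hc⟩ : ∃ c, c = ⁅u, v⁆ := ⟨_, rfl⟩
  rw [← hc]
  have hcR : c ∈ R := by
    rw [hc, commutatorElement_def, mul_assoc, mul_assoc, ← mul_assoc (a := v)]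
    exact mul_mem hu (Subgroup.Normal.conj_mem ‹R.Normal› _ (inv_mem hu) v)
  obtain ⟨a, ha, b, hb, hab⟩ := Submodule.mem_sup.mp hv
  have h1 : MonoidAlgebra.of ℤ (FreeGroup α) u * MonoidAlgebra.of ℤ (FreeGroup α) v
      - MonoidAlgebra.of ℤ (FreeGroup α) v * MonoidAlgebra.of ℤ (FreeGroup α) u
      ∈ relIdeal (FreeGroup α) R * augIdeal (FreeGroup α) ⊔ relIdeal (FreeGroup α) (LL n R) := by
    have e : MonoidAlgebra.of ℤ (FreeGroup α) u * MonoidAlgebra.of ℤ (FreeGroup α) v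
        - MonoidAlgebra.of ℤ (FreeGroup α) v * MonoidAlgebra.of ℤ (FreeGroup α) u
        = (MonoidAlgebra.of ℤ (FreeGroup α) u - 1) * (MonoidAlgebra.of ℤ (FreeGroup α) v - 1)
          - (MonoidAlgebra.of ℤ (FreeGroup α) v - 1) * (MonoidAlgebra.of ℤ (FreeGroup α) u - 1) := by
      noncomm_ring
    rw [e, ← hab]
    have m1 : (MonoidAlgebra.of ℤ (FreeGroup α) u - 1) * (a + b) ∈ relIdeal (FreeGroup α) R * augIdeal (FreeGroup α) := by
      rw [hab]
      exact Submodule.mul_mem_mul (of_sub_one_mem_relIdeal hu) (of_sub_one_mem_augIdeal v)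
    have m2 : a * (MonoidAlgebra.of ℤ (FreeGroup α) u - 1) ∈ relIdeal (FreeGroup α) R * augIdeal (FreeGroup α) :=
      rf_mul_right ha _
    have m4 : b * (MonoidAlgebra.of ℤ (FreeGroup α) u - 1)
        ∈ relIdeal (FreeGroup α) R * augIdeal (FreeGroup α) ⊔ relIdeal (FreeGroup α) (LL n R) :=
      pow_f_mul_relIdeal n R ‹R.Normal›
        (Submodule.mul_mem_mul hb (of_sub_one_mem_relIdeal hu))
    rw [add_mul]
    exact sub_mem (Submodule.mem_sup_left m1)
      (add_mem (Submodule.mem_sup_left m2) m4)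
  have h2 : MonoidAlgebra.of ℤ (FreeGroup α) c - 1
      = (MonoidAlgebra.of ℤ (FreeGroup α) u * MonoidAlgebra.of ℤ (FreeGroup α) v
          - MonoidAlgebra.of ℤ (FreeGroup α) v * MonoidAlgebra.of ℤ (FreeGroup α) u)
        * MonoidAlgebra.of ℤ (FreeGroup α) ((v * u)⁻¹) := by
    rw [sub_mul, ← map_mul, ← map_mul, ← map_mul, ← map_mul,
      show u * v * (v * u)⁻¹ = ⁅u, v⁆ by rw [commutatorElement_def]; group,
      mul_inv_cancel, map_one, hc]
  have h3 : MonoidAlgebra.of ℤ (FreeGroup α) c - 1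
      ∈ relIdeal (FreeGroup α) R * augIdeal (FreeGroup α) ⊔ relIdeal (FreeGroup α) (LL n R) := by
    rw [h2]
    obtain ⟨p, hp, q, hq, hpq⟩ := Submodule.mem_sup.mp h1
    rw [← hpq, add_mul]
    exact add_mem (Submodule.mem_sup_left (rf_mul_right hp _))
      (Submodule.mem_sup_right (relIdeal_mul_right hq _))
  obtain ⟨p, hp, q, hq, hpq⟩ := Submodule.mem_sup.mp h3
  have hLLR : LL n R ≤ R := LL_le n R ‹R.Normal›
  obtain ⟨w, hwLL, hw⟩ := exists_group_elt_congruent hLLR hq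
  have hzR : c * w⁻¹ ∈ R := mul_mem hcR (inv_mem (hLLR hwLL))
  have hz1 : MonoidAlgebra.of ℤ (FreeGroup α) (c * w⁻¹) - 1
      = ((MonoidAlgebra.of ℤ (FreeGroup α) c - 1) - (MonoidAlgebra.of ℤ (FreeGroup α) w - 1))
        * MonoidAlgebra.of ℤ (FreeGroup α) w⁻¹ := by
    rw [sub_sub_sub_cancel_right, sub_mul, ← map_mul, ← map_mul, mul_inv_cancel, map_one]
  have hz2 : MonoidAlgebra.of ℤ (FreeGroup α) (c * w⁻¹) - 1 ∈ relIdeal (FreeGroup α) R * augIdeal (FreeGroup α) := by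
    rw [hz1]
    refine rf_mul_right ?_ _
    have e : (MonoidAlgebra.of ℤ (FreeGroup α) c - 1) - (MonoidAlgebra.of ℤ (FreeGroup α) w - 1)
        = p + (q - (MonoidAlgebra.of ℤ (FreeGroup α) w - 1)) := by
      rw [← hpq]; abel
    rw [e]
    exact add_mem hp hw
  have hzC : c * w⁻¹ ∈ ⁅R, R⁆ := mem_commutator_of_sub_one_mem_rf R hzR hz2
  have hwlcs : w ∈ (⊤ : Subgroup (FreeGroup α)).lowerCentralSeries (n - 1) := by
    have g1 : LL n R ≤ (⊤ : Subgroup (FreeGroup α)).lowerCentralSeries n := by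
      have g0 := LL_le_lcs n 0 R
        (by rw [Subgroup.lowerCentralSeries_zero]; exact le_top)
      rwa [Nat.zero_add] at g0
    exact Subgroup.lowerCentralSeries_antitone ⊤ (Nat.sub_le n 1) (g1 hwLL)
  rw [← inv_mul_cancel_right c w]
  exact mul_mem ((le_sup_left : ⁅R, R⁆ ≤ _) hzC)
    ((le_sup_right : (⊤ : Subgroup (FreeGroup α)).lowerCentralSeries (n - 1) ≤ _) hwlcs)
end

section
/- Let F be a free group with normal subgroup R and G = F/R. There is a natural short exact sequence 0 → ([[R,F],F]γ_4(F))/([R,F']γ_4(F)) → γ_3(F)/([R,F']γ_4(F)) → L³(G_ab) → 0, where L³(G_ab) ≅ γ_3(F)/([[R,F],F]γ_4(F)) is the third Lie power of the abelianization of G. -/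
section Aux

variable {G : Type*} [Group G]

/-- Three subgroups style lemma: for `R` normal, `⁅R, ⁅⊤,⊤⁆⁆ ≤ ⁅⁅R,⊤⁆,⊤⁆ ⊔ K`
for any normal `K`. -/
theorem aux_three_subgroups (R : Subgroup G) [R.Normal] (K : Subgroup G) [K.Normal] :
    ⁅R, commutator G⁆ ≤ ⁅⁅R, (⊤ : Subgroup G)⁆, ⊤⁆ ⊔ K := by
  set N' : Subgroup G := ⁅⁅R, (⊤ : Subgroup G)⁆, ⊤⁆ ⊔ K with hN'
  have : N'.Normal := Subgroup.sup_normal _ _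
  set q := QuotientGroup.mk' N' with hq
  have hker : (⁅R, commutator G⁆ : Subgroup G).map q ≤ ⊥ := by
    have h1 : (⁅⁅R, (⊤ : Subgroup G)⁆, ⊤⁆ : Subgroup G).map q = ⊥ := by
      rw [eq_bot_iff, Subgroup.map_le_iff_le_comap]
      intro x hx
      have hxN' : x ∈ N' := SetLike.le_def.mp le_sup_left hx
      simp only [Subgroup.mem_comap, Subgroup.mem_bot]
      have hk : x ∈ (QuotientGroup.mk' N').ker := by
        rw [QuotientGroup.ker_mk']; exact hxN'
      exact hk
    have hArot : ⁅⁅(⊤ : Subgroup (G ⧸ N')), R.map q⁆, (⊤ : Subgroup (G ⧸ N'))⁆ = (⊥ : Subgroup (G ⧸ N')) := by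
      rw [Subgroup.commutator_comm (⊤ : Subgroup (G ⧸ N')) (R.map q)]
      calc ⁅⁅R.map q, (⊤ : Subgroup (G ⧸ N'))⁆, (⊤ : Subgroup (G ⧸ N'))⁆
          = (⁅⁅R, (⊤ : Subgroup G)⁆, ⊤⁆ : Subgroup G).map q := by
            rw [Subgroup.map_commutator, Subgroup.map_commutator,
              Subgroup.map_top_of_surjective q (QuotientGroup.mk'_surjective N')]
        _ = ⊥ := h1
    have hBrot : ⁅⁅R.map q, (⊤ : Subgroup (G ⧸ N'))⁆, (⊤ : Subgroup (G ⧸ N'))⁆ = (⊥ : Subgroup (G ⧸ N')) := by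
      calc ⁅⁅R.map q, (⊤ : Subgroup (G ⧸ N'))⁆, (⊤ : Subgroup (G ⧸ N'))⁆
          = (⁅⁅R, (⊤ : Subgroup G)⁆, ⊤⁆ : Subgroup G).map q := by
            rw [Subgroup.map_commutator, Subgroup.map_commutator,
              Subgroup.map_top_of_surjective q (QuotientGroup.mk'_surjective N')]
        _ = ⊥ := h1
    have key : ⁅⁅(⊤ : Subgroup (G ⧸ N')), (⊤ : Subgroup (G ⧸ N'))⁆, R.map q⁆ = (⊥ : Subgroup (G ⧸ N')) :=
      Subgroup.commutator_commutator_eq_bot_of_rotate hArot hBrot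
    have : (⁅R, commutator G⁆ : Subgroup G).map q ≤ ⁅⁅(⊤ : Subgroup (G ⧸ N')), (⊤ : Subgroup (G ⧸ N'))⁆, R.map q⁆ := by
      rw [Subgroup.map_commutator]
      rw [Subgroup.commutator_comm]
      apply Subgroup.commutator_mono
      · unfold commutator
        rw [Subgroup.map_commutator,
          Subgroup.map_top_of_surjective q (QuotientGroup.mk'_surjective N')]
      · exact le_rfl
    exact key ▸ this
  intro x hx
  have : q x ∈ (⊥ : Subgroup (G ⧸ N')) := hker (Subgroup.mem_map_of_mem q hx)
  rw [Subgroup.mem_bot] at this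
  rwa [← QuotientGroup.ker_mk' N', MonoidHom.mem_ker]

end Aux

/-- There is a natural short exact sequence
`0 → [[R,F],F]γ_4(F)/([R,F']γ_4(F)) → γ_3(F)/([R,F']γ_4(F)) → L³(G_ab) → 0`,
where `L³(G_ab) = γ_3(F)/([[R,F],F]γ_4(F))` is the third Lie power of `G_ab`.
The middle and right groups are realized as images of `γ_3(F)` in the quotients of `F`
by `N = [R,F']γ_4(F)` resp. `N' = [[R,F],F]γ_4(F)`, and the sequence is encoded by a
surjection `φ` (induced by the identity of `F`) whose kernel is the image of
`[[R,F],F]γ_4(F)` in `F/N`. -/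
theorem lie_cube_ses (α : Type*) (R : Subgroup (FreeGroup α)) [R.Normal] :
    ∃ φ : ↥(Subgroup.map
            (QuotientGroup.mk'
              (⁅R, commutator (FreeGroup α)⁆ ⊔ (⊤ : Subgroup (FreeGroup α)).lowerCentralSeries 3))
            ((⊤ : Subgroup (FreeGroup α)).lowerCentralSeries 2)) →*
          ↥(Subgroup.map
            (QuotientGroup.mk'
              (⁅⁅R, (⊤ : Subgroup (FreeGroup α))⁆, ⊤⁆ ⊔ (⊤ : Subgroup (FreeGroup α)).lowerCentralSeries 3))
            ((⊤ : Subgroup (FreeGroup α)).lowerCentralSeries 2)),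
      Function.Surjective φ ∧
      (∀ (w : FreeGroup α) (hw : w ∈ (⊤ : Subgroup (FreeGroup α)).lowerCentralSeries 2),
          (φ ⟨QuotientGroup.mk'
                (⁅R, commutator (FreeGroup α)⁆ ⊔ (⊤ : Subgroup (FreeGroup α)).lowerCentralSeries 3) w,
              Subgroup.mem_map_of_mem _ hw⟩ :
            FreeGroup α ⧸
              (⁅⁅R, (⊤ : Subgroup (FreeGroup α))⁆, ⊤⁆ ⊔ (⊤ : Subgroup (FreeGroup α)).lowerCentralSeries 3)) =
            QuotientGroup.mk'
              (⁅⁅R, (⊤ : Subgroup (FreeGroup α))⁆, ⊤⁆ ⊔ (⊤ : Subgroup (FreeGroup α)).lowerCentralSeries 3) w) ∧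
      φ.ker = (Subgroup.map
          (QuotientGroup.mk'
            (⁅R, commutator (FreeGroup α)⁆ ⊔ (⊤ : Subgroup (FreeGroup α)).lowerCentralSeries 3))
          (⁅⁅R, (⊤ : Subgroup (FreeGroup α))⁆, ⊤⁆ ⊔ (⊤ : Subgroup (FreeGroup α)).lowerCentralSeries 3)).subgroupOf
        (Subgroup.map
          (QuotientGroup.mk'
            (⁅R, commutator (FreeGroup α)⁆ ⊔ (⊤ : Subgroup (FreeGroup α)).lowerCentralSeries 3))
          ((⊤ : Subgroup (FreeGroup α)).lowerCentralSeries 2)) := by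
  set F := FreeGroup α
  set N : Subgroup F := ⁅R, commutator F⁆ ⊔ (⊤ : Subgroup F).lowerCentralSeries 3 with hN
  set N' : Subgroup F := ⁅⁅R, (⊤ : Subgroup F)⁆, ⊤⁆ ⊔ (⊤ : Subgroup F).lowerCentralSeries 3 with hN'
  have hNN' : N ≤ N' :=
    sup_le (aux_three_subgroups R ((⊤ : Subgroup F).lowerCentralSeries 3)) le_sup_right
  have hcomap : N ≤ N'.comap (MonoidHom.id F) := hNN'
  set f : F ⧸ N →* F ⧸ N' := QuotientGroup.map N N' (MonoidHom.id F) hcomap with hf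
  have hfmk : ∀ w : F, f (QuotientGroup.mk' N w) = QuotientGroup.mk' N' w := fun w =>
    QuotientGroup.map_mk' N N' (MonoidHom.id F) hcomap w
  set K : Subgroup (F ⧸ N) := ((⊤ : Subgroup F).lowerCentralSeries 2).map (QuotientGroup.mk' N) with hK
  set K' : Subgroup (F ⧸ N') := ((⊤ : Subgroup F).lowerCentralSeries 2).map (QuotientGroup.mk' N') with hK'
  have hmapK : K.map f = K' := by
    rw [hK, hK', Subgroup.map_map]
    congr 1
  refine ⟨((MulEquiv.subgroupCongr hmapK).toMonoidHom).comp (f.subgroupMap K), ?_, ?_, ?_⟩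
  · exact (MulEquiv.subgroupCongr hmapK).surjective.comp (f.subgroupMap_surjective K)
  · intro w hw
    show (f (QuotientGroup.mk' N w) : F ⧸ N') = QuotientGroup.mk' N' w
    exact hfmk w
  · have hkerf : f.ker = N'.map (QuotientGroup.mk' N) := by
      ext x
      obtain ⟨w, rfl⟩ := QuotientGroup.mk'_surjective N x
      simp only [MonoidHom.mem_ker, hfmk]
      constructor
      · intro h
        have : w ∈ (QuotientGroup.mk' N').ker := by simpa [MonoidHom.mem_ker] using h
        rw [QuotientGroup.ker_mk'] at this
        exact Subgroup.mem_map_of_mem _ this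
      · rintro ⟨v, hv, hvx⟩
        have : QuotientGroup.mk' N' v = 1 := by
          have : v ∈ (QuotientGroup.mk' N').ker := by rw [QuotientGroup.ker_mk']; exact hv
          simpa [MonoidHom.mem_ker] using this
        calc QuotientGroup.mk' N' w
            = f (QuotientGroup.mk' N w) := (hfmk w).symm
          _ = f (QuotientGroup.mk' N v) := by rw [hvx]
          _ = QuotientGroup.mk' N' v := hfmk v
          _ = 1 := this
    ext x
    simp only [MonoidHom.mem_ker, Subgroup.mem_subgroupOf]
    constructor
    · intro h
      have h' : f (x : F ⧸ N) = 1 := by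
        have := congrArg (Subtype.val) h
        exact this
      rw [← MonoidHom.mem_ker, hkerf] at h'
      exact h'
    · intro h
      have h' : f (x : F ⧸ N) = 1 := by
        rw [← MonoidHom.mem_ker, hkerf]; exact h
      ext
      exact h'
end

section
/- Let C be a small category, F : C → Grp a functor, and G ⊆ F a subfunctor. For x ∈ Lim(F/G) ⊆ ∏_c F(c)/G(c) and any preimage x̄ ∈ ∏_c F(c), the family d(x̄)(α) = x̄(cod(α))⁻¹ · F(α)(x̄(dom(α))) is a 1-cocycle with values in G; moreover if x̄, x̃ are two preimages of x then d(x̄) and d(x̃) lie in the same orbit under the action of ∏_c G(c), so the connecting map δ : Lim(F/G) → Lim¹(G) = Z¹(C,G)/∏_c G(c) is well defined. -/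
open CategoryTheory

/-- Let `G ⊆ F` be a subfunctor (given by subgroups `S c ≤ F(c)` compatible with the maps).
For an element of `Lim(F/G)` represented by a family `x̄ ∈ ∏_c F(c)` compatible modulo `S`,
the family `d(x̄)(α) = x̄(cod α)⁻¹ · F(α)(x̄(dom α))` is a 1-cocycle with values in `G`;
moreover any two preimages yield cocycles in the same orbit of `∏_c G(c)`, so the connecting
map `δ : Lim(F/G) → Lim¹(G)` is well defined. -/
theorem connecting_cocycle_well_defined {C : Type*} [SmallCategory C] (F : C ⥤ GrpCat)
    (S : ∀ c : C, Subgroup (F.obj c))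
    (hS : ∀ ⦃c d : C⦄ (α : c ⟶ d), ∀ g ∈ S c, F.map α g ∈ S d)
    (x : ∀ c : C, F.obj c)
    (hx : ∀ ⦃c d : C⦄ (α : c ⟶ d), (x d)⁻¹ * F.map α (x c) ∈ S d) :
    -- `d(x̄)` has values in `G` and satisfies the 1-cocycle identity
    ((∀ ⦃c d : C⦄ (α : c ⟶ d), (x d)⁻¹ * F.map α (x c) ∈ S d) ∧
      ∀ ⦃b c d : C⦄ (β : b ⟶ c) (α : c ⟶ d),
        (x d)⁻¹ * F.map (β ≫ α) (x b) =
          ((x d)⁻¹ * F.map α (x c)) * F.map α ((x c)⁻¹ * F.map β (x b))) ∧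
    -- any two preimages of the same element of `Lim(F/G)` give cocycles in the same orbit
    ∀ x' : ∀ c : C, F.obj c, (∀ c : C, (x c)⁻¹ * x' c ∈ S c) →
      ∃ y : ∀ c : C, F.obj c, (∀ c : C, y c ∈ S c) ∧
        ∀ ⦃c d : C⦄ (α : c ⟶ d),
          (x' d)⁻¹ * F.map α (x' c) =
            (y d)⁻¹ * ((x d)⁻¹ * F.map α (x c)) * F.map α (y c) := by
  refine ⟨⟨hx, ?_⟩, ?_⟩
  · intro b c d β α
    simp [F.map_comp, map_mul, map_inv, mul_assoc]
  · intro x' hx'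
    refine ⟨fun c => (x c)⁻¹ * x' c, hx', ?_⟩
    intro c d α
    simp [map_mul, map_inv, mul_assoc]
end

section
/- Let C be a small category, F : C → Grp a functor, and G ⊆ F a subfunctor that is central, i.e., G(c) is contained in the center of F(c) for all c. Then the connecting map δ : Lim(F/G) → Lim¹(G) is a group homomorphism. -/
open CategoryTheory

/-- If `G ⊆ F` is a central subfunctor (each `S c` is contained in the center of `F(c)`),
then the connecting map `δ : Lim(F/G) → Lim¹(G)` is a group homomorphism: for any two
elements of `Lim(F/G)`, represented by families `x₁, x₂` compatible modulo `S` (their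
product being represented by the pointwise product `x₁·x₂`), the cocycle `d(x₁·x₂)`
is equivalent, under the action of `∏_c G(c)`, to the product cocycle `d(x₁)·d(x₂)`. -/
theorem connecting_map_hom_of_central {C : Type*} [SmallCategory C] (F : C ⥤ GrpCat)
    (S : ∀ c : C, Subgroup (F.obj c))
    (hS : ∀ ⦃c d : C⦄ (α : c ⟶ d), ∀ g ∈ S c, F.map α g ∈ S d)
    (hcentral : ∀ c : C, S c ≤ Subgroup.center (F.obj c))
    (x₁ x₂ : ∀ c : C, F.obj c)
    (hx₁ : ∀ ⦃c d : C⦄ (α : c ⟶ d), (x₁ d)⁻¹ * F.map α (x₁ c) ∈ S d)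
    (hx₂ : ∀ ⦃c d : C⦄ (α : c ⟶ d), (x₂ d)⁻¹ * F.map α (x₂ c) ∈ S d) :
    ∃ y : ∀ c : C, F.obj c, (∀ c : C, y c ∈ S c) ∧
      ∀ ⦃c d : C⦄ (α : c ⟶ d),
        (x₁ d * x₂ d)⁻¹ * F.map α (x₁ c * x₂ c) =
          (y d)⁻¹ *
            (((x₁ d)⁻¹ * F.map α (x₁ c)) * ((x₂ d)⁻¹ * F.map α (x₂ c))) *
            F.map α (y c) := by
  refine ⟨fun _ => 1, fun c => (S c).one_mem, fun c d α => ?_⟩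
  have hcomm := (hcentral d (hx₁ α)).comm (x₂ d)⁻¹
  simp only [map_mul, inv_one, one_mul, map_one, mul_one, mul_inv_rev]
  rw [← mul_assoc, ← mul_assoc, mul_assoc (x₂ d)⁻¹ (x₁ d)⁻¹, ← hcomm]
end

section
/- Let C be a small category, F : C → Grp a functor, and G ⊆ F a subfunctor. Then the sequence of pointed sets 1 → Lim(G) → Lim(F) → Lim(F/G) → Lim¹(G) → Lim¹(F) is exact, where exactness at each term means the kernel (preimage of the basepoint) equals the image of the previous map. -/
open CategoryTheory

universe u

variable {C : Type u} [SmallCategory C]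

/-- The set `Z¹(C,F)` of 1-cocycles of a small category `C` with coefficients in a
functor `F : C → Grp`. -/
def Cocycle (F : C ⥤ GrpCat.{u}) : Type u :=
  {a : ∀ ⦃c d : C⦄, (c ⟶ d) → F.obj d //
    ∀ ⦃b c d : C⦄ (β : b ⟶ c) (α : c ⟶ d), a (β ≫ α) = a α * F.map α (a β)}

/-- Two 1-cocycles are equivalent if they differ by the action of `∏_c F(c)`. -/
def cocycleEquiv (F : C ⥤ GrpCat.{u}) (a a' : Cocycle F) : Prop :=
  ∃ x : ∀ c : C, F.obj c, ∀ ⦃c d : C⦄ (α : c ⟶ d),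
    a'.1 α = (x d)⁻¹ * a.1 α * F.map α (x c)

/-- The pointed set `Lim¹ F = Z¹(C,F)/∏_c F(c)`. -/
def Lim1 (F : C ⥤ GrpCat.{u}) : Type u := Quot (cocycleEquiv F)

/-- The trivial 1-cocycle. -/
def oneCocycle (F : C ⥤ GrpCat.{u}) : Cocycle F :=
  ⟨fun _ _ _ => 1, by intros; simp⟩
/-- 1-cocycles with values in a subfunctor given by subgroups `S c ≤ F(c)`. -/
def SubCocycle (F : C ⥤ GrpCat.{u}) (S : ∀ c : C, Subgroup (F.obj c)) : Type u :=
  {a : ∀ ⦃c d : C⦄, (c ⟶ d) → F.obj d //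
    (∀ ⦃c d : C⦄ (α : c ⟶ d), a α ∈ S d) ∧
    ∀ ⦃b c d : C⦄ (β : b ⟶ c) (α : c ⟶ d), a (β ≫ α) = a α * F.map α (a β)}

/-- Two `S`-valued 1-cocycles are equivalent if they differ by the action of `∏_c S(c)`. -/
def subCocycleEquiv (F : C ⥤ GrpCat.{u}) (S : ∀ c : C, Subgroup (F.obj c))
    (a a' : SubCocycle F S) : Prop :=
  ∃ x : ∀ c : C, F.obj c, (∀ c : C, x c ∈ S c) ∧
    ∀ ⦃c d : C⦄ (α : c ⟶ d), a'.1 α = (x d)⁻¹ * a.1 α * F.map α (x c)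

/-- The pointed set `Lim¹ G = Z¹(C,G)/∏_c G(c)` for the subfunctor `G` given by `S`. -/
def Lim1S (F : C ⥤ GrpCat.{u}) (S : ∀ c : C, Subgroup (F.obj c)) : Type u :=
  Quot (subCocycleEquiv F S)

/-- The trivial `S`-valued 1-cocycle. -/
def oneSubCocycle (F : C ⥤ GrpCat.{u}) (S : ∀ c : C, Subgroup (F.obj c)) : SubCocycle F S :=
  ⟨fun _ _ _ => 1, ⟨fun _ _ _ => one_mem _, by intros; simp⟩⟩

/-- The connecting 1-cocycle `d(x̄)(α) = x̄(cod α)⁻¹ · F(α)(x̄(dom α))` associated to a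
family `x̄` representing an element of `Lim (F/G)`. -/
def deltaCocycle (F : C ⥤ GrpCat.{u}) (S : ∀ c : C, Subgroup (F.obj c))
    (x : ∀ c : C, F.obj c)
    (hx : ∀ ⦃c d : C⦄ (α : c ⟶ d), (x d)⁻¹ * F.map α (x c) ∈ S d) :
    SubCocycle F S :=
  ⟨fun c d α => (x d)⁻¹ * F.map α (x c), ⟨hx, by
    intro b c d β α
    simp only []
    rw [F.map_comp]
    simp [mul_assoc]⟩⟩

lemma cocycleEquiv_equivalence (F : C ⥤ GrpCat.{u}) : Equivalence (cocycleEquiv F) := by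
  constructor
  · intro a
    exact ⟨fun _ => 1, by intro c d α; simp⟩
  · rintro a a' ⟨x, hx⟩
    refine ⟨fun c => (x c)⁻¹, fun c d α => ?_⟩
    rw [hx α]
    simp [mul_assoc]
  · rintro a a' a'' ⟨x, hx⟩ ⟨y, hy⟩
    refine ⟨fun c => x c * y c, fun c d α => ?_⟩
    rw [hy α, hx α]
    simp [mul_assoc]

lemma subCocycleEquiv_equivalence (F : C ⥤ GrpCat.{u}) (S : ∀ c : C, Subgroup (F.obj c)) :
    Equivalence (subCocycleEquiv F S) := by
  constructor
  · intro a
    exact ⟨fun _ => 1, fun _ => one_mem _, by intro c d α; simp⟩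
  · rintro a a' ⟨x, hxS, hx⟩
    refine ⟨fun c => (x c)⁻¹, fun c => inv_mem (hxS c), fun c d α => ?_⟩
    rw [hx α]
    simp [mul_assoc]
  · rintro a a' a'' ⟨x, hxS, hx⟩ ⟨y, hyS, hy⟩
    refine ⟨fun c => x c * y c, fun c => mul_mem (hxS c) (hyS c), fun c d α => ?_⟩
    rw [hy α, hx α]
    simp [mul_assoc]

lemma quot_mk_eq_iff {α : Type*} {r : α → α → Prop} (h : Equivalence r) (a b : α) :
    Quot.mk r a = Quot.mk r b ↔ r a b := by
  rw [Quot.eq]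
  exact h.eqvGen_iff

/-- For a subfunctor `G ⊆ F` (given by subgroups `S c ≤ F(c)`), the sequence of pointed sets
`1 → Lim G → Lim F → Lim(F/G) → Lim¹ G → Lim¹ F` is exact. -/
theorem five_term_exact (F : C ⥤ GrpCat.{u}) (S : ∀ c : C, Subgroup (F.obj c))
    (hS : ∀ ⦃c d : C⦄ (α : c ⟶ d), ∀ g ∈ S c, F.map α g ∈ S d) :
    -- exactness at `Lim G`: the map `Lim G → Lim F` is injective
    Function.Injective
      (fun x : {x : ∀ c : C, F.obj c //
          (∀ c : C, x c ∈ S c) ∧ ∀ ⦃c d : C⦄ (α : c ⟶ d), x d = F.map α (x c)} =>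
        (⟨x.1, x.2.2⟩ : {x : ∀ c : C, F.obj c //
          ∀ ⦃c d : C⦄ (α : c ⟶ d), x d = F.map α (x c)})) ∧
    -- exactness at `Lim F`: `x ∈ Lim F` maps to the basepoint of `Lim (F/G)`
    -- iff it comes from `Lim G`
    (∀ x : ∀ c : C, F.obj c, (∀ ⦃c d : C⦄ (α : c ⟶ d), x d = F.map α (x c)) →
      ((∀ c : C, x c ∈ S c) ↔
        ∃ y : ∀ c : C, F.obj c,
          ((∀ c : C, y c ∈ S c) ∧ ∀ ⦃c d : C⦄ (α : c ⟶ d), y d = F.map α (y c)) ∧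
          y = x)) ∧
    -- exactness at `Lim (F/G)`: an element of `Lim (F/G)`, represented by a family `x`
    -- compatible modulo `S`, maps to the basepoint of `Lim¹ G` under `δ` iff it is the
    -- image of an element of `Lim F`
    (∀ (x : ∀ c : C, F.obj c)
        (hx : ∀ ⦃c d : C⦄ (α : c ⟶ d), (x d)⁻¹ * F.map α (x c) ∈ S d),
      Quot.mk (subCocycleEquiv F S) (deltaCocycle F S x hx) =
          Quot.mk (subCocycleEquiv F S) (oneSubCocycle F S) ↔
        ∃ y : ∀ c : C, F.obj c, (∀ ⦃c d : C⦄ (α : c ⟶ d), y d = F.map α (y c)) ∧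
          ∀ c : C, (x c)⁻¹ * y c ∈ S c) ∧
    -- exactness at `Lim¹ G`: a class in `Lim¹ G` maps to the basepoint of `Lim¹ F`
    -- iff it is in the image of `δ`
    ∀ a : SubCocycle F S,
      Quot.mk (cocycleEquiv F) ⟨a.1, a.2.2⟩ = Quot.mk (cocycleEquiv F) (oneCocycle F) ↔
        ∃ (x : ∀ c : C, F.obj c)
          (hx : ∀ ⦃c d : C⦄ (α : c ⟶ d), (x d)⁻¹ * F.map α (x c) ∈ S d),
          Quot.mk (subCocycleEquiv F S) (deltaCocycle F S x hx) =
            Quot.mk (subCocycleEquiv F S) a := by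
  refine ⟨?_, ?_, ?_, ?_⟩
  · intro x y h
    simp only [Subtype.mk.injEq] at h
    exact Subtype.ext h
  · intro x hx
    constructor
    · intro hS'
      exact ⟨x, ⟨hS', hx⟩, rfl⟩
    · rintro ⟨y, ⟨hyS, _⟩, rfl⟩
      exact hyS
  · intro x hx
    rw [quot_mk_eq_iff (subCocycleEquiv_equivalence F S)]
    constructor
    · rintro ⟨s, hsS, hs⟩
      refine ⟨fun c => x c * s c, fun c d α => ?_, fun c => ?_⟩
      · have h1 := hs α
        simp only [deltaCocycle, oneSubCocycle] at h1
        show x d * s d = F.map α (x c * s c)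
        calc x d * s d
            = x d * s d * ((s d)⁻¹ * ((x d)⁻¹ * F.map α (x c)) * F.map α (s c)) := by
              rw [← h1]; simp
          _ = F.map α (x c * s c) := by simp only [map_mul]; group
      · simpa using hsS c
    · rintro ⟨y, hy, hS'⟩
      refine ⟨fun c => (x c)⁻¹ * y c, hS', fun c d α => ?_⟩
      simp only [deltaCocycle, oneSubCocycle]
      rw [hy α]
      simp only [map_mul, map_inv]
      group
  · intro a
    refine (quot_mk_eq_iff (cocycleEquiv_equivalence F) _ _).trans ?_
    constructor
    · rintro ⟨x, hx⟩
      have key : ∀ ⦃c d : C⦄ (α : c ⟶ d), a.1 α = x d * (F.map α (x c))⁻¹ := by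
        intro c d α
        have h1 := hx α
        simp only [oneCocycle] at h1
        calc a.1 α
            = x d * ((x d)⁻¹ * a.1 α * F.map α (x c)) * (F.map α (x c))⁻¹ := by group
          _ = x d * (1 : F.obj d) * (F.map α (x c))⁻¹ := by rw [← h1]
          _ = x d * (F.map α (x c))⁻¹ := by group
      have hxmem : ∀ ⦃c d : C⦄ (α : c ⟶ d),
          (((x d)⁻¹ : F.obj d))⁻¹ * F.map α ((x c)⁻¹) ∈ S d := by
        intro c d α
        have h2 : (((x d)⁻¹ : F.obj d))⁻¹ * F.map α ((x c)⁻¹) = a.1 α := by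
          rw [key α]; simp [map_inv]
        rw [h2]
        exact a.2.1 α
      refine ⟨fun c => (x c)⁻¹, hxmem, ?_⟩
      congr 1
      apply Subtype.ext
      funext c d α
      simp only [deltaCocycle]
      rw [key α]
      simp [map_inv]
    · rintro ⟨x, hx, heq⟩
      rw [quot_mk_eq_iff (subCocycleEquiv_equivalence F S)] at heq
      obtain ⟨s, hsS, hs⟩ := heq
      refine ⟨fun c => (x c * s c)⁻¹, fun c d α => ?_⟩
      have h1 := hs α
      simp only [deltaCocycle] at h1
      show (oneCocycle F).1 α = ((x d * s d)⁻¹)⁻¹ * a.1 α * F.map α ((x c * s c)⁻¹)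
      rw [h1]
      simp only [oneCocycle, map_mul, map_inv]
      group
end

section
/- Let C be a small category and 1 → F' → F → F'' → 1 a short exact sequence of functors C → Grp (i.e., pointwise short exact). Then the induced sequence of pointed sets Lim¹(F') → Lim¹(F) → Lim¹(F'') is exact: the class of a 1-cocycle a ∈ Z¹(C,F) maps to the basepoint of Lim¹(F'') if and only if it lies in the image of Lim¹(F') → Lim¹(F). -/
open CategoryTheory

universe u

variable {C : Type u} [SmallCategory C]

/-- Pushing a 1-cocycle forward along a natural transformation `η : F ⟶ F'`. -/
def mapCocycle {F F' : C ⥤ GrpCat.{u}} (η : F ⟶ F') (a : Cocycle F) : Cocycle F' :=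
  ⟨fun _ d α => η.app d (a.1 α), by
    intro b c d β α
    have hnat : ∀ (z : F.obj c), η.app d (F.map α z) = F'.map α (η.app c z) := by
      intro z
      have := η.naturality α
      calc η.app d (F.map α z) = (F.map α ≫ η.app d) z := rfl
        _ = (η.app c ≫ F'.map α) z := by rw [this]
        _ = F'.map α (η.app c z) := rfl
    simp only [a.2 β α, map_mul, hnat]⟩

lemma nat_app {F G : C ⥤ GrpCat.{u}} (η : F ⟶ G) {c d : C} (α : c ⟶ d) (z : F.obj c) :
    η.app d (F.map α z) = G.map α (η.app c z) := by
  have := η.naturality α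
  calc η.app d (F.map α z) = (F.map α ≫ η.app d) z := rfl
    _ = (η.app c ≫ G.map α) z := by rw [this]
    _ = G.map α (η.app c z) := rfl

lemma quot_mk_eq_iff_s19 (F : C ⥤ GrpCat.{u}) (a b : Cocycle F) :
    Quot.mk (cocycleEquiv F) a = Quot.mk (cocycleEquiv F) b ↔ cocycleEquiv F a b := by
  rw [Quot.eq]
  exact (cocycleEquiv_equivalence F).eqvGen_iff

/-- For a pointwise short exact sequence `1 → F' → F → F'' → 1` of functors `C → Grp`,
the sequence `Lim¹ F' → Lim¹ F → Lim¹ F''` of pointed sets is exact: the class of a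
1-cocycle `a ∈ Z¹(C,F)` maps to the basepoint of `Lim¹ F''` iff it lies in the image
of `Lim¹ F' → Lim¹ F`. -/
theorem lim1_exact_of_ses (F' F F'' : C ⥤ GrpCat.{u}) (ι : F' ⟶ F) (p : F ⟶ F'')
    (hinj : ∀ c : C, Function.Injective (ι.app c))
    (hsurj : ∀ c : C, Function.Surjective (p.app c))
    (hexact : ∀ (c : C) (y : F.obj c), (∃ z : F'.obj c, ι.app c z = y) ↔ p.app c y = 1) :
    ∀ a : Cocycle F,
      Quot.mk (cocycleEquiv F'') (mapCocycle p a) =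
          Quot.mk (cocycleEquiv F'') (oneCocycle F'') ↔
        ∃ a' : Cocycle F',
          Quot.mk (cocycleEquiv F) (mapCocycle ι a') = Quot.mk (cocycleEquiv F) a := by
  intro a
  rw [quot_mk_eq_iff_s19]
  constructor
  · rintro ⟨x'', hx''⟩
    -- lift x'' along p
    choose y hy using fun c => hsurj c (x'' c)
    -- the twisted cocycle
    have key : ∀ ⦃c d : C⦄ (α : c ⟶ d),
        p.app d ((y d)⁻¹ * a.1 α * F.map α (y c)) = 1 := by
      intro c d α
      have h := hx'' α
      simp only [mapCocycle, oneCocycle] at h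
      have : p.app d ((y d)⁻¹ * a.1 α * F.map α (y c))
          = (x'' d)⁻¹ * p.app d (a.1 α) * F''.map α (x'' c) := by
        simp [map_mul, map_inv, hy, nat_app p α (y c)]
      rw [this, ← h]
    choose a' ha' using fun (c d : C) (α : c ⟶ d) =>
      ((hexact d ((y d)⁻¹ * a.1 α * F.map α (y c))).2 (key α))
    refine ⟨⟨fun c d α => a' c d α, ?_⟩, ?_⟩
    · intro b c d β α
      apply hinj d
      rw [map_mul, ha', ha', nat_app ι α, ha']
      rw [a.2 β α]
      simp [map_mul, map_inv, mul_assoc, ← nat_app]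
    · rw [quot_mk_eq_iff_s19]
      refine ⟨fun c => (y c)⁻¹, ?_⟩
      intro c d α
      simp only [mapCocycle, ha', map_inv]
      group
  · rintro ⟨a', ha⟩
    rw [quot_mk_eq_iff_s19] at ha
    obtain ⟨x, hx⟩ := ha
    refine ⟨fun c => (p.app c (x c))⁻¹, ?_⟩
    intro c d α
    have hpι : ∀ (c : C) (z : F'.obj c), p.app c (ι.app c z) = 1 := by
      intro c z
      exact (hexact c (ι.app c z)).1 ⟨z, rfl⟩
    simp only [mapCocycle, oneCocycle, hx α, map_mul, map_inv, nat_app p α (x c), hpι]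
    group
end
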